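/- arXiv:0903.2567 — 2 statements merged into one kernel-verified Lean document; each statement's English description precedes it below -/
import Mathlib

section
/- Let X be a nonempty CFG-space over a Boolean ring B and f : X → B a contractive map, where B carries the metric d(a,b) = a + b. Then there exists u ∈ X such that f(x) ≤ f(u) for all x ∈ X (i.e., f attains a maximum on X in the order a ≤ b ⟺ ab = a). -/
/-- The order on a Boolean ring: `a ≤ b` iff `a * b = a`. -/
def ble {B : Type} [BooleanRing B] (a b : B) : Prop := a * b = a

/-- The join on a Boolean ring: `a ∨ b = a + b + a * b`. -/
def bjoin {B : Type} [BooleanRing B] (a b : B) : B := a + b + a * b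

/-- A Boolean metric space over a Boolean ring `B`: `d x y = 0` iff `x = y`,
`d` is symmetric, and `d x z ≤ d x y ∨ d y z`. -/
structure BooleanMetric (B : Type) [BooleanRing B] (X : Type) where
  d : X → X → B
  d_eq_zero : ∀ x y, d x y = 0 ↔ x = y
  d_symm : ∀ x y, d x y = d y x
  d_tri : ∀ x y z, ble (d x z) (bjoin (d x y) (d y z))

/-- The coefficients `a i` have pairwise zero products. -/
def PairwiseOrthCoeffs {B : Type} [BooleanRing B] {k : ℕ} (a : Fin k → B) : Prop :=
  ∀ i j, i ≠ j → a i * a j = 0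

/-- `x` is a convex combination of `x₁, …, xₖ` with coefficients `a₁, …, aₖ`,
i.e. `aᵢ · d(x, xᵢ) = 0` for all `i`. -/
def IsConvComb {B X : Type} [BooleanRing B] (m : BooleanMetric B X) {k : ℕ}
    (a : Fin k → B) (xs : Fin k → X) (x : X) : Prop :=
  ∀ i, a i * m.d x (xs i) = 0

/-- A subset `S` is convex: every convex combination of points of `S` (with pairwise
disjoint coefficients summing to `1`) exists in `S`. -/
def IsConvexSubspace {B X : Type} [BooleanRing B] (m : BooleanMetric B X) (S : Set X) : Prop :=
  ∀ (k : ℕ) (a : Fin k → B) (xs : Fin k → X), (∀ i, xs i ∈ S) →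
    PairwiseOrthCoeffs a → (∑ i, a i) = 1 → ∃ x ∈ S, IsConvComb m a xs x

/-- A subset `S` is a CFG-space: it is convex and there are finitely many points of `S`
of which every point of `S` is a convex combination. -/
def IsCFGSubspace {B X : Type} [BooleanRing B] (m : BooleanMetric B X) (S : Set X) : Prop :=
  IsConvexSubspace m S ∧
  ∃ (k : ℕ) (xs : Fin k → X), (∀ i, xs i ∈ S) ∧
    ∀ x ∈ S, ∃ a : Fin k → B, PairwiseOrthCoeffs a ∧ (∑ i, a i) = 1 ∧ IsConvComb m a xs x

/-- A contractive map: `d(f x, f y) ≤ d(x, y)`. -/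
def Contractive {B X Y : Type} [BooleanRing B] (mX : BooleanMetric B X) (mY : BooleanMetric B Y)
    (f : X → Y) : Prop :=
  ∀ x y, ble (mY.d (f x) (f y)) (mX.d x y)

/-- `sm a x` is the convex combination `a x + (a+1) 0` of `x` and the base point `z`
with coefficients `a` and `a + 1`. -/
def IsScalarMul {B X : Type} [BooleanRing B] (m : BooleanMetric B X) (z : X)
    (sm : B → X → X) : Prop :=
  ∀ a x, a * m.d (sm a x) x = 0 ∧ (a + 1) * m.d (sm a x) z = 0

/-- `x ⊥ y`, i.e. `x ⋆ y = (d(x,y)+1) x = 0`. -/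
def Orth {B X : Type} [BooleanRing B] (m : BooleanMetric B X) (z : X) (sm : B → X → X)
    (x y : X) : Prop :=
  sm (m.d x y + 1) x = z

/-- `x` is the convex combination of `0, x₁, …, xₖ` with coefficients
`a₀ = 1 + a₁ + ⋯ + aₖ, a₁, …, aₖ`. -/
def ConvCombWithZero {B X : Type} [BooleanRing B] (m : BooleanMetric B X) (z : X) {k : ℕ}
    (a : Fin k → B) (xs : Fin k → X) (x : X) : Prop :=
  PairwiseOrthCoeffs a ∧ (∀ i, a i * m.d x (xs i) = 0) ∧ (1 + ∑ i, a i) * m.d x z = 0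

/-- `x₁, …, xₖ` is a referential of `(X, z)`: the `xᵢ` are nonzero, pairwise orthogonal,
and every point of `X` is a convex combination of `0, x₁, …, xₖ`. -/
def IsReferential {B X : Type} [BooleanRing B] (m : BooleanMetric B X) (z : X)
    (sm : B → X → X) {k : ℕ} (xs : Fin k → X) : Prop :=
  (∀ i, xs i ≠ z) ∧ (∀ i j, i ≠ j → Orth m z sm (xs i) (xs j)) ∧
  ∀ x : X, ∃ a : Fin k → B, ConvCombWithZero m z a xs x

/-- The whole space is a convex closure of the subset `S`: it is convex and every point
is a convex combination of points of `S`. -/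
def IsConvexClosure {B X : Type} [BooleanRing B] (m : BooleanMetric B X) (S : Set X) : Prop :=
  IsConvexSubspace m Set.univ ∧
  ∀ x : X, ∃ (k : ℕ) (a : Fin k → B) (xs : Fin k → X),
    (∀ i, xs i ∈ S) ∧ PairwiseOrthCoeffs a ∧ (∑ i, a i) = 1 ∧ IsConvComb m a xs x

/-- A finite set `R` is a referential of `(X, z)` (set version). -/
def IsReferentialSet {B X : Type} [BooleanRing B] (m : BooleanMetric B X) (z : X)
    (sm : B → X → X) (R : Finset X) : Prop :=
  z ∉ R ∧ (∀ x ∈ R, ∀ y ∈ R, x ≠ y → Orth m z sm x y) ∧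
  ∀ u : X, ∃ a : X → B,
    (∀ x ∈ R, ∀ y ∈ R, x ≠ y → a x * a y = 0) ∧
    (∀ x ∈ R, a x * m.d u x = 0) ∧ (1 + ∑ x ∈ R, a x) * m.d u z = 0

private lemma aux_cc {B : Type} [BooleanRing B] (x : B) : x * (1 + x) = 0 := by
  linear_combination BooleanRing.mul_self x + BooleanRing.add_self x

private lemma aux_cP {B : Type} [BooleanRing B] (c : ℕ → B) {i n : ℕ} (h : i < n) :
    c i * ∏ l ∈ Finset.range n, (1 + c l) = 0 := by
  rw [← Finset.mul_prod_erase _ _ (Finset.mem_range.mpr h)]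
  linear_combination (∏ l ∈ (Finset.range n).erase i, (1 + c l)) * aux_cc (c i)

private lemma aux_sum {B : Type} [BooleanRing B] (c : ℕ → B) (n : ℕ) :
    ∑ i ∈ Finset.range n, c i * ∏ l ∈ Finset.range i, (1 + c l)
      = 1 + ∏ l ∈ Finset.range n, (1 + c l) := by
  induction n with
  | zero => simpa using (BooleanRing.add_self (1 : B)).symm
  | succ n ih => rw [Finset.sum_range_succ, Finset.prod_range_succ, ih]; ring

/-- A contractive map from a nonempty CFG-space to `B` (with the metric `d(a,b) = a+b`)
attains a maximum. -/
theorem stmt17 {B X : Type} [BooleanRing B] (m : BooleanMetric B X)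
    (hne : Nonempty X) (hX : IsCFGSubspace m Set.univ)
    (f : X → B) (hf : ∀ x y, ble (f x + f y) (m.d x y)) :
    ∃ u : X, ∀ x : X, ble (f x) (f u) := by
  classical
  obtain ⟨hconv, k, xs, hxs, hgen⟩ := hX
  obtain ⟨x0⟩ := hne
  -- value formula: f of a convex combination is the corresponding combination of values
  have hval : ∀ (x : X) (k' : ℕ) (a : Fin k' → B) (ys : Fin k' → X),
      (∑ i, a i) = 1 → IsConvComb m a ys x → f x = ∑ i, a i * f (ys i) := by
    intro x k' a ys hsum hcc
    have h1 : ∀ i, a i * f x = a i * f (ys i) := by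
      intro i
      have h2 : (f x + f (ys i)) * m.d x (ys i) = f x + f (ys i) := hf x (ys i)
      have h3 := hcc i
      have h0 : a i * (f x + f (ys i)) = 0 := by
        calc a i * (f x + f (ys i)) = (f x + f (ys i)) * (a i * m.d x (ys i)) := by
              conv_lhs => rw [← h2]
              ring
          _ = 0 := by rw [h3, mul_zero]
      linear_combination h0 - BooleanRing.add_self (a i * f (ys i))
    calc f x = (∑ i, a i) * f x := by rw [hsum, one_mul]
      _ = ∑ i, a i * f x := Finset.sum_mul _ _ _
      _ = ∑ i, a i * f (ys i) := Finset.sum_congr rfl fun i _ => h1 i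
  set c : ℕ → B := fun n => if h : n < k then f (xs ⟨n, h⟩) else 0 with hc
  set P : B := ∏ l ∈ Finset.range k, (1 + c l) with hP
  have hcv : ∀ i : Fin k, c i = f (xs i) := by
    intro i; simp [hc, i.isLt]
  set a : Fin (k + 1) → B :=
    fun i => if h : (i : ℕ) < k then c i * ∏ l ∈ Finset.range (i : ℕ), (1 + c l) else P with ha
  set ys : Fin (k + 1) → X := fun i => if h : (i : ℕ) < k then xs ⟨i, h⟩ else x0 with hys
  -- pairwise orthogonality
  have hPb : ∀ n, n < k → P * (c n * ∏ l ∈ Finset.range n, (1 + c l)) = 0 := by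
    intro n hn
    have h := aux_cP c hn
    rw [← hP] at h
    linear_combination (∏ l ∈ Finset.range n, (1 + c l)) * h
  have hbb : ∀ i j : ℕ, i < j →
      (c i * ∏ l ∈ Finset.range i, (1 + c l)) * (c j * ∏ l ∈ Finset.range j, (1 + c l)) = 0 := by
    intro i j hij
    have h := aux_cP c hij
    linear_combination ((∏ l ∈ Finset.range i, (1 + c l)) * c j) * h
  have horth : PairwiseOrthCoeffs a := by
    intro i j hij
    have hv : (i : ℕ) ≠ (j : ℕ) := fun h => hij (Fin.ext h)
    simp only [ha]
    by_cases hi : (i : ℕ) < k <;> by_cases hj : (j : ℕ) < k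
    · rw [dif_pos hi, dif_pos hj]
      rcases lt_or_gt_of_ne hv with h | h
      · exact hbb _ _ h
      · rw [mul_comm]; exact hbb _ _ h
    · rw [dif_pos hi, dif_neg hj, mul_comm]; exact hPb _ hi
    · rw [dif_neg hi, dif_pos hj]; exact hPb _ hj
    · omega
  -- sum of coefficients is 1
  have hsum : (∑ i, a i) = 1 := by
    rw [Fin.sum_univ_castSucc]
    have hlast : a (Fin.last k) = P := by simp [ha]
    have hcast : ∀ i : Fin k, a i.castSucc
        = c i * ∏ l ∈ Finset.range (i : ℕ), (1 + c l) := by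
      intro i; simp [ha, i.isLt]
    rw [hlast, Finset.sum_congr rfl fun i _ => hcast i,
      Fin.sum_univ_eq_sum_range (fun n => c n * ∏ l ∈ Finset.range n, (1 + c l)) k,
      aux_sum c k, ← hP]
    linear_combination BooleanRing.add_self P
  obtain ⟨u, -, hu⟩ := hconv (k + 1) a ys (fun i => Set.mem_univ _) horth hsum
  -- the value at u
  have hfu : f u = (1 + P) + P * f x0 := by
    rw [hval u (k + 1) a ys hsum hu, Fin.sum_univ_castSucc]
    have hlast : a (Fin.last k) * f (ys (Fin.last k)) = P * f x0 := by simp [ha, hys]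
    have hcast : ∀ i : Fin k, a i.castSucc * f (ys i.castSucc)
        = c i * ∏ l ∈ Finset.range (i : ℕ), (1 + c l) := by
      intro i
      have h1 : a i.castSucc = c i * ∏ l ∈ Finset.range (i : ℕ), (1 + c l) := by
        simp [ha, i.isLt]
      have h2 : ys i.castSucc = xs i := by simp [hys, i.isLt]
      rw [h1, h2, ← hcv i]
      linear_combination (∏ l ∈ Finset.range (i : ℕ), (1 + c l)) * BooleanRing.mul_self (c i)
    rw [hlast, Finset.sum_congr rfl fun i _ => hcast i,
      Fin.sum_univ_eq_sum_range (fun n => c n * ∏ l ∈ Finset.range n, (1 + c l)) k,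
      aux_sum c k, ← hP]
  -- every value is killed by P
  have hfP : ∀ x : X, f x * P = 0 := by
    intro x
    obtain ⟨a', ho', hs', hc'⟩ := hgen x (Set.mem_univ x)
    rw [hval x k a' xs hs' hc', Finset.sum_mul]
    refine Finset.sum_eq_zero fun i _ => ?_
    have h1 : c (i : ℕ) * P = 0 := by
      have h := aux_cP c i.isLt; rw [← hP] at h; exact h
    rw [← hcv i]
    linear_combination a' i * h1
  refine ⟨u, fun x => ?_⟩
  show f x * f u = f x
  rw [hfu]
  linear_combination (1 + f x0) * hfP x
end

section
/- Let X be a CFG-space over a Boolean ring B, let 0, 0' ∈ X, let {x₁,…,xₙ} be a base of (X,0) and {y₁,…,yₘ} a base of (X,0'). Then n = m, d(0,xᵢ) = d(0',yᵢ) for i = 1,…,n, and there exists an isometry f : X → X with f(0) = 0' and f(xᵢ) = yᵢ for i = 1,…,n. -/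
namespace Stmt19Aux
open BooleanRing

variable {B X : Type} [BooleanRing B]

section Stalk
variable {m : Ideal B}

lemma one_not_mem (hm : m.IsMaximal) : (1 : B) ∉ m :=
  m.ne_top_iff_one.mp hm.ne_top

lemma compl_mem (hm : m.IsMaximal) {x : B} (hx : x ∉ m) : 1 + x ∈ m := by
  have h0 : x * (1 + x) ∈ m := by rw [mul_one_add_self]; exact m.zero_mem
  rcases hm.isPrime.mem_or_mem h0 with h | h
  · exact absurd h hx
  · exact h

lemma mem_of_le {x y : B} (hxy : x * y = x) (hy : y ∈ m) : x ∈ m := by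
  rw [← hxy]; exact m.mul_mem_left x hy

lemma mem_of_mul_eq_zero (hm : m.IsMaximal) {x y : B} (h : x * y = 0) (hx : x ∉ m) : y ∈ m := by
  rcases hm.isPrime.mem_or_mem (show x * y ∈ m by rw [h]; exact m.zero_mem) with h' | h'
  · exact absurd h' hx
  · exact h'

lemma mul_not_mem_iff (hm : m.IsMaximal) {x y : B} : x * y ∉ m ↔ x ∉ m ∧ y ∉ m := by
  constructor
  · intro h
    exact ⟨fun hx => h (m.mul_mem_right y hx), fun hy => h (m.mul_mem_left x hy)⟩
  · rintro ⟨hx, hy⟩ h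
    rcases hm.isPrime.mem_or_mem h with h' | h'
    · exact hx h'
    · exact hy h'

lemma add_mem_iff (hm : m.IsMaximal) {x y : B} : x + y ∈ m ↔ (x ∈ m ↔ y ∈ m) := by
  by_cases hx : x ∈ m <;> by_cases hy : y ∈ m
  · simp [hx, hy, m.add_mem hx hy]
  · have hmem : x + y ∉ m := fun h =>
      hy (by have := m.sub_mem h hx; rwa [show x + y - x = y by ring] at this)
    simp [hx, hy, hmem]
  · have hmem : x + y ∉ m := fun h =>
      hx (by have := m.sub_mem h hy; rwa [show x + y - y = x by ring] at this)
    simp [hx, hy, hmem]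
  · simp only [hx, hy, iff_true]
    have h1 : (1 : B) + x ∈ m := compl_mem hm hx
    have h2 : (1 : B) + y ∈ m := compl_mem hm hy
    have := m.add_mem h1 h2
    rwa [show (1 : B) + x + (1 + y) = x + y + (1 + 1) by ring, add_self, add_zero] at this

lemma exists_maximal_not_mem {q : B} (hq : q ≠ 0) :
    ∃ m : Ideal B, m.IsMaximal ∧ q ∉ m := by
  have hne : Ideal.span {1 + q} ≠ ⊤ := by
    intro h
    rw [Ideal.eq_top_iff_one, Ideal.mem_span_singleton'] at h
    obtain ⟨a, ha⟩ := h
    apply hq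
    calc q = q * (a * (1 + q)) := by rw [ha, mul_one]
      _ = a * (q * (1 + q)) := by ring
      _ = 0 := by rw [mul_one_add_self, mul_zero]
  obtain ⟨M, hM, hle⟩ := Ideal.exists_le_maximal _ hne
  refine ⟨M, hM, fun hqM => ?_⟩
  have h1 : (1 : B) + q ∈ M := hle (Ideal.subset_span rfl)
  have : (1 : B) ∈ M := by
    have := M.add_mem h1 hqM
    rwa [add_assoc, add_self, add_zero] at this
  exact one_not_mem hM this

lemma eq_of_stalks {x y : B} (h : ∀ m : Ideal B, m.IsMaximal → (x ∈ m ↔ y ∈ m)) : x = y := by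
  by_contra hne
  have hq : x + y ≠ 0 := fun h0 => hne ((BooleanRing.add_eq_zero' x y).mp h0)
  obtain ⟨m, hm, hq'⟩ := exists_maximal_not_mem hq
  exact hq' ((add_mem_iff hm).mpr (h m hm))

lemma eq_zero_of_stalks {x : B} (h : ∀ m : Ideal B, m.IsMaximal → x ∈ m) : x = 0 :=
  eq_of_stalks fun m hm => by simp [h m hm, m.zero_mem]

lemma sum_not_mem (hm : m.IsMaximal) {k : ℕ} {a : Fin k → B} (hpair : PairwiseOrthCoeffs a)
    {i : Fin k} (hi : a i ∉ m) : (∑ j, a j) ∉ m := by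
  have hrest : ∑ j ∈ Finset.univ.erase i, a j ∈ m := by
    refine Ideal.sum_mem _ fun j hj => ?_
    have hji : j ≠ i := (Finset.mem_erase.mp hj).1
    exact mem_of_mul_eq_zero hm (by rw [mul_comm]; exact hpair j i hji) hi
  intro hsum
  apply hi
  have heq : a i + ∑ j ∈ Finset.univ.erase i, a j = ∑ j, a j :=
    Finset.add_sum_erase _ _ (Finset.mem_univ i)
  have : a i = (∑ j, a j) - ∑ j ∈ Finset.univ.erase i, a j := by rw [← heq]; ring
  rw [this]
  exact m.sub_mem hsum hrest

end Stalk
end Stmt19Aux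

namespace Stmt19Aux
open BooleanRing

variable {B X : Type} [BooleanRing B]

section Metric
variable (mS : BooleanMetric B X) {m : Ideal B}

lemma tri_mem (hm : m.IsMaximal) {x y w : X} (hxy : mS.d x y ∈ m) (hyw : mS.d y w ∈ m) :
    mS.d x w ∈ m := by
  have h := mS.d_tri x y w
  unfold ble bjoin at h
  have hj : mS.d x y + mS.d y w + mS.d x y * mS.d y w ∈ m :=
    m.add_mem (m.add_mem hxy hyw) (m.mul_mem_right _ hxy)
  exact mem_of_le h hj

end Metric

section Ref
variable (mS : BooleanMetric B X) (z : X) (sm : B → X → X) {n : ℕ} (xs : Fin n → X)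

/-- The `i`-th coordinate of `u` with respect to the referential `xs` of `(X, z)`. -/
noncomputable def coord (u : X) (i : Fin n) : B :=
  mS.d z (xs i) * (1 + mS.d u (xs i))

lemma coord_mul_e (u : X) (i : Fin n) :
    coord mS z xs u i * mS.d z (xs i) = coord mS z xs u i := by
  unfold coord
  linear_combination (1 + mS.d u (xs i)) * mul_self (mS.d z (xs i))

variable {m : Ideal B}

lemma coord_not_mem_iff (hm : m.IsMaximal) (u : X) (i : Fin n) :
    coord mS z xs u i ∉ m ↔ (mS.d z (xs i) ∉ m ∧ mS.d u (xs i) ∈ m) := by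
  unfold coord
  rw [mul_not_mem_iff hm]
  constructor
  · rintro ⟨he, hd⟩
    refine ⟨he, ?_⟩
    by_contra hdm
    exact hd (compl_mem hm hdm)
  · rintro ⟨he, hd⟩
    refine ⟨he, fun h => one_not_mem hm ?_⟩
    have := m.add_mem h hd
    rwa [add_assoc, add_self, add_zero] at this

variable (hsm : IsScalarMul mS z sm) (href : IsReferential mS z sm xs)
include hsm href

lemma orth_e_mul {i j : Fin n} (hij : i ≠ j) :
    mS.d z (xs i) * mS.d (xs i) (xs j) = mS.d z (xs i) := by
  have ho := href.2.1 i j hij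
  unfold Orth at ho
  obtain ⟨h1, _⟩ := hsm (mS.d (xs i) (xs j) + 1) (xs i)
  rw [ho] at h1
  linear_combination h1 - add_self (mS.d z (xs i))

lemma orth_not_mem (hm : m.IsMaximal) {i j : Fin n} (hij : i ≠ j)
    (hi : mS.d z (xs i) ∉ m) : mS.d (xs i) (xs j) ∉ m :=
  fun h => hi (mem_of_le (orth_e_mul mS z sm xs hsm href hij) h)

omit hsm

lemma zero_class_of_coeffs (hm : m.IsMaximal) {u : X} {a : Fin n → B}
    (ha : ConvCombWithZero mS z a xs u) (hall : ∀ s, a s ∈ m) : mS.d u z ∈ m := by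
  obtain ⟨hpair, hcc, hz⟩ := ha
  have hsum : (∑ i, a i) ∈ m := Ideal.sum_mem _ fun i _ => hall i
  have h1 : (1 + ∑ i, a i) ∉ m := fun h =>
    one_not_mem hm (by have := m.sub_mem h hsum; rwa [show 1 + ∑ i, a i - ∑ i, a i = (1 : B) by ring] at this)
  exact mem_of_mul_eq_zero hm hz h1

lemma classify (hm : m.IsMaximal) (u : X) :
    (∃ i, mS.d z (xs i) ∉ m ∧ mS.d u (xs i) ∈ m) ∨ mS.d u z ∈ m := by
  obtain ⟨a, ha⟩ := href.2.2 u
  by_cases hall : ∀ s, a s ∈ m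
  · exact Or.inr (zero_class_of_coeffs mS z sm xs href hm ha hall)
  · push_neg at hall
    obtain ⟨i, hi⟩ := hall
    have hdui : mS.d u (xs i) ∈ m := mem_of_mul_eq_zero hm (ha.2.1 i) hi
    by_cases hei : mS.d z (xs i) ∈ m
    · exact Or.inr (tri_mem mS hm hdui (by rw [mS.d_symm]; exact hei))
    · exact Or.inl ⟨i, hei, hdui⟩

include hsm

lemma coord_spec {u : X} {a : Fin n → B} (ha : ConvCombWithZero mS z a xs u) (i : Fin n) :
    coord mS z xs u i = a i * mS.d z (xs i) := by
  apply eq_of_stalks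
  intro m hm
  rw [← not_iff_not, coord_not_mem_iff mS z xs hm, mul_not_mem_iff hm]
  constructor
  · rintro ⟨he, hd⟩
    refine ⟨?_, he⟩
    by_contra hai
    by_cases hall : ∀ s, a s ∈ m
    · have hz := zero_class_of_coeffs mS z sm xs href hm ha hall
      exact he (tri_mem mS hm (by rw [mS.d_symm]; exact hz) hd)
    · push_neg at hall
      obtain ⟨s, hs⟩ := hall
      have hsi : s ≠ i := fun h => hs (h ▸ hai)
      have hdus : mS.d u (xs s) ∈ m := mem_of_mul_eq_zero hm (ha.2.1 s) hs
      have : mS.d (xs i) (xs s) ∈ m :=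
        tri_mem mS hm (by rw [mS.d_symm]; exact hd) hdus
      exact orth_not_mem mS z sm xs hsm href hm (fun h => hsi h.symm) he this
  · rintro ⟨hai, he⟩
    exact ⟨he, mem_of_mul_eq_zero hm (ha.2.1 i) hai⟩

lemma coord_pairwise (u : X) : PairwiseOrthCoeffs (coord mS z xs u) := by
  intro i j hij
  apply eq_zero_of_stalks
  intro m hm
  by_contra h
  obtain ⟨hi, hj⟩ := (mul_not_mem_iff hm).mp h
  obtain ⟨hei, hdi⟩ := (coord_not_mem_iff mS z xs hm u i).mp hi
  obtain ⟨hej, hdj⟩ := (coord_not_mem_iff mS z xs hm u j).mp hj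
  have : mS.d (xs i) (xs j) ∈ m := tri_mem mS hm (by rw [mS.d_symm]; exact hdi) hdj
  exact orth_not_mem mS z sm xs hsm href hm hij hei this

lemma coord_conv (u : X) : ConvCombWithZero mS z (coord mS z xs u) xs u := by
  refine ⟨coord_pairwise mS z sm xs hsm href u, fun i => ?_, ?_⟩
  · apply eq_zero_of_stalks
    intro m hm
    by_cases h : coord mS z xs u i ∈ m
    · exact m.mul_mem_right _ h
    · exact m.mul_mem_left _ ((coord_not_mem_iff mS z xs hm u i).mp h).2
  · apply eq_zero_of_stalks
    intro m hm
    by_cases hz : mS.d u z ∈ m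
    · exact m.mul_mem_left _ hz
    · rcases classify mS z sm xs href hm u with ⟨i, hei, hdi⟩ | h
      · have hci : coord mS z xs u i ∉ m := (coord_not_mem_iff mS z xs hm u i).mpr ⟨hei, hdi⟩
        have hsum : (∑ i, coord mS z xs u i) ∉ m :=
          sum_not_mem hm (coord_pairwise mS z sm xs hsm href u) hci
        exact m.mul_mem_right _ (compl_mem hm hsum)
      · exact absurd h hz

lemma dist_mem_iff (hm : m.IsMaximal) (u v : X) :
    mS.d u v ∈ m ↔ ∀ i, (coord mS z xs u i ∈ m ↔ coord mS z xs v i ∈ m) := by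
  constructor
  · intro h i
    rw [← not_iff_not, coord_not_mem_iff mS z xs hm, coord_not_mem_iff mS z xs hm]
    constructor
    · rintro ⟨he, hd⟩
      exact ⟨he, tri_mem mS hm (by rw [mS.d_symm]; exact h) hd⟩
    · rintro ⟨he, hd⟩
      exact ⟨he, tri_mem mS hm h hd⟩
  · intro h
    rcases classify mS z sm xs href hm u with ⟨i, hei, hdi⟩ | hz0
    · have hcu : coord mS z xs u i ∉ m := (coord_not_mem_iff mS z xs hm u i).mpr ⟨hei, hdi⟩
      have hcv : coord mS z xs v i ∉ m := fun hmem => hcu ((h i).mpr hmem)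
      obtain ⟨_, hdv⟩ := (coord_not_mem_iff mS z xs hm v i).mp hcv
      exact tri_mem mS hm hdi (by rw [mS.d_symm]; exact hdv)
    · rcases classify mS z sm xs href hm v with ⟨j, hej, hdj⟩ | hz1
      · have hcv : coord mS z xs v j ∉ m := (coord_not_mem_iff mS z xs hm v j).mpr ⟨hej, hdj⟩
        have hcu : coord mS z xs u j ∉ m := fun hmem => hcv ((h j).mp hmem)
        obtain ⟨_, hdu⟩ := (coord_not_mem_iff mS z xs hm u j).mp hcu
        exact absurd (tri_mem mS hm (by rw [mS.d_symm]; exact hz0) hdu) hej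
      · exact tri_mem mS hm hz0 (by rw [mS.d_symm]; exact hz1)

omit hsm href

lemma exists_comb (hconv : IsConvexSubspace mS Set.univ) (b : Fin n → B)
    (hb : PairwiseOrthCoeffs b) : ∃ v, ConvCombWithZero mS z b xs v := by
  have hzero : ∀ j, (1 + ∑ i, b i) * b j = 0 := by
    intro j
    have hsb : (∑ i, b i) * b j = b j := by
      rw [Finset.sum_mul]
      rw [Finset.sum_eq_single j (fun s _ hs => hb s j hs) (by simp)]
      exact mul_self _
    calc (1 + ∑ i, b i) * b j = b j + (∑ i, b i) * b j := by ring
      _ = b j + b j := by rw [hsb]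
      _ = 0 := add_self _
  set a : Fin (n + 1) → B := Fin.cons (1 + ∑ i, b i) b with ha
  set pts : Fin (n + 1) → X := Fin.cons z xs with hpts
  have hpair : PairwiseOrthCoeffs a := by
    intro i j hij
    induction i using Fin.cases with
    | zero =>
      induction j using Fin.cases with
      | zero => exact absurd rfl hij
      | succ j' => simpa [ha] using hzero j'
    | succ i' =>
      induction j using Fin.cases with
      | zero => simp only [ha, Fin.cons_succ, Fin.cons_zero]; rw [mul_comm]; exact hzero i'
      | succ j' =>
        simp only [ha, Fin.cons_succ]
        exact hb i' j' (fun h => hij (by rw [h]))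
  have hsum : ∑ s, a s = 1 := by
    rw [ha, Fin.sum_cons]
    linear_combination add_self (∑ i, b i)
  obtain ⟨v, _, hv⟩ := hconv (n + 1) a pts (fun _ => Set.mem_univ _) hpair hsum
  refine ⟨v, hb, fun i => ?_, ?_⟩
  · simpa [ha, hpts] using hv i.succ
  · simpa [ha, hpts] using hv 0

end Ref
end Stmt19Aux

namespace Stmt19Aux
open BooleanRing

variable {B X : Type} [BooleanRing B]

instance instFiniteOption {α : Type} [Finite α] : Finite (Option α) := by
  haveI := Fintype.ofFinite α
  infer_instance

section Count
variable (mS : BooleanMetric B X)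
variable (z : X) (sm : B → X → X) {n : ℕ} (xs : Fin n → X)
variable {m : Ideal B}

lemma trans_cover (hm : m.IsMaximal) (href : IsReferential mS z sm xs) (u : X) :
    ∃ t : Option {i : Fin n // mS.d z (xs i) ∉ m},
      mS.d u (t.elim z (fun i => xs i.1)) ∈ m := by
  rcases classify mS z sm xs href hm u with ⟨i, hei, hdi⟩ | h
  · exact ⟨some ⟨i, hei⟩, hdi⟩
  · exact ⟨none, h⟩

lemma trans_sep (hm : m.IsMaximal) (hsm : IsScalarMul mS z sm)
    (href : IsReferential mS z sm xs)
    (t s : Option {i : Fin n // mS.d z (xs i) ∉ m})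
    (h : mS.d (t.elim z (fun i => xs i.1)) (s.elim z (fun i => xs i.1)) ∈ m) : t = s := by
  match t, s with
  | none, none => rfl
  | none, some j => exact absurd h j.2
  | some i, none =>
    exact absurd (by rw [mS.d_symm]; exact h) i.2
  | some i, some j =>
    by_cases hij : i.1 = j.1
    · exact congrArg some (Subtype.ext hij)
    · exact absurd h (orth_not_mem mS z sm xs hsm href hm hij i.2)

variable (z' : X) (sm' : B → X → X) {n' : ℕ} (ys : Fin n' → X)

lemma card_trans_eq (hm : m.IsMaximal)
    (hsm : IsScalarMul mS z sm) (href : IsReferential mS z sm xs)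
    (hsm' : IsScalarMul mS z' sm') (href' : IsReferential mS z' sm' ys) :
    Nat.card {i : Fin n // mS.d z (xs i) ∉ m} =
      Nat.card {j : Fin n' // mS.d z' (ys j) ∉ m} := by
  set gx : Option {i : Fin n // mS.d z (xs i) ∉ m} → X := fun t => t.elim z (fun i => xs i.1)
  set gy : Option {j : Fin n' // mS.d z' (ys j) ∉ m} → X := fun t => t.elim z' (fun j => ys j.1)
  have key : ∀ (α β : Type) (gα : α → X) (gβ : β → X),
      (∀ u : X, ∃ t : β, mS.d u (gβ t) ∈ m) →
      (∀ t s : α, mS.d (gα t) (gα s) ∈ m → t = s) →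
      [Finite β] → Nat.card α ≤ Nat.card β := by
    intro α β gα gβ hcov hsep _
    set F : α → β := fun t => Classical.choose (hcov (gα t)) with hF
    have hFspec : ∀ t, mS.d (gα t) (gβ (F t)) ∈ m := fun t => Classical.choose_spec (hcov (gα t))
    have hinj : Function.Injective F := by
      intro t s hts
      apply hsep
      refine tri_mem mS hm (hFspec t) ?_
      rw [mS.d_symm, hts]
      exact hFspec s
    exact Nat.card_le_card_of_injective F hinj
  haveI : Finite (Option {j : Fin n' // mS.d z' (ys j) ∉ m}) := inferInstance
  haveI : Finite (Option {i : Fin n // mS.d z (xs i) ∉ m}) := inferInstance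
  have h1 := key _ _ gx gy (trans_cover mS z' sm' ys hm href')
    (trans_sep mS z sm xs hm hsm href)
  have h2 := key _ _ gy gx (trans_cover mS z sm xs hm href)
    (trans_sep mS z' sm' ys hm hsm' href')
  have := le_antisymm h1 h2
  rwa [Finite.card_option, Finite.card_option, Nat.add_right_cancel_iff] at this

lemma e_not_mem_iff_lt_card (hm : m.IsMaximal)
    (hxbase : ∀ i j : Fin n, i ≤ j → ble (mS.d z (xs j)) (mS.d z (xs i))) (k : Fin n) :
    mS.d z (xs k) ∉ m ↔ (k : ℕ) < Nat.card {i : Fin n // mS.d z (xs i) ∉ m} := by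
  classical
  constructor
  · intro hk
    have hinj : Function.Injective (fun j : Fin (k.1 + 1) =>
        (⟨⟨j.1, lt_of_le_of_lt (Nat.lt_succ_iff.mp j.2) k.2⟩, by
          intro hmem
          exact hk (mem_of_le (hxbase ⟨j.1, _⟩ k (by
            simp only [Fin.le_def]
            exact Nat.lt_succ_iff.mp j.2)) hmem)⟩ :
          {i : Fin n // mS.d z (xs i) ∉ m})) := by
      intro a b hab
      have : a.1 = b.1 := congrArg (fun t => t.1.1) hab
      exact Fin.ext this
    have h1 := Nat.card_le_card_of_injective _ hinj
    have h2 : Nat.card (Fin (k.1 + 1)) = k.1 + 1 :=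
      Nat.card_eq_fintype_card.trans (Fintype.card_fin _)
    omega
  · intro hlt
    by_contra hk
    have hinj : Function.Injective (fun i : {i : Fin n // mS.d z (xs i) ∉ m} =>
        (⟨i.1.1, by
          by_contra hge
          push_neg at hge
          exact i.2 (mem_of_le (hxbase k i.1 (Fin.le_def.mpr hge)) hk)⟩ :
          Fin k.1)) := by
      intro a b hab
      have : a.1.1 = b.1.1 := congrArg (fun (t : Fin k.1) => t.1) hab
      exact Subtype.ext (Fin.ext this)
    have h1 := Nat.card_le_card_of_injective _ hinj
    have h2 : Nat.card (Fin k.1) = k.1 :=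
      Nat.card_eq_fintype_card.trans (Fintype.card_fin _)
    omega

end Count
end Stmt19Aux

open Stmt19Aux BooleanRing

/-- Uniqueness of bases: if `x₁,…,xₙ` is a base of `(X, z)` and `y₁,…,yₘ` a base of
`(X, z')`, then `n = m`, `|xᵢ| = |yᵢ|`, and there is an isometry `f : X → X` with
`f z = z'` and `f xᵢ = yᵢ`. -/
theorem stmt19 {B X : Type} [BooleanRing B] (mS : BooleanMetric B X)
    (hX : IsCFGSubspace mS Set.univ)
    (z z' : X) (sm sm' : B → X → X)
    (hsm : IsScalarMul mS z sm) (hsm' : IsScalarMul mS z' sm')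
    {n m : ℕ} (xs : Fin n → X) (ys : Fin m → X)
    (hxref : IsReferential mS z sm xs)
    (hxbase : ∀ i j : Fin n, i ≤ j → ble (mS.d z (xs j)) (mS.d z (xs i)))
    (hyref : IsReferential mS z' sm' ys)
    (hybase : ∀ i j : Fin m, i ≤ j → ble (mS.d z' (ys j)) (mS.d z' (ys i))) :
    ∃ h : n = m,
      (∀ i : Fin n, mS.d z (xs i) = mS.d z' (ys (Fin.cast h i))) ∧
      ∃ f : X → X, Function.Bijective f ∧ (∀ x y, mS.d (f x) (f y) = mS.d x y) ∧
        f z = z' ∧ ∀ i : Fin n, f (xs i) = ys (Fin.cast h i) := by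
  classical
  obtain ⟨hconv, -⟩ := hX
  have hcard : ∀ (M : Ideal B), M.IsMaximal →
      Nat.card {i : Fin n // mS.d z (xs i) ∉ M} =
        Nat.card {j : Fin m // mS.d z' (ys j) ∉ M} :=
    fun M hM => card_trans_eq mS z sm xs z' sm' ys hM hsm hxref hsm' hyref
  have hxne : ∀ i : Fin n, mS.d z (xs i) ≠ 0 := fun i h =>
    hxref.1 i ((mS.d_eq_zero z (xs i)).mp h).symm
  have hyne : ∀ j : Fin m, mS.d z' (ys j) ≠ 0 := fun j h =>
    hyref.1 j ((mS.d_eq_zero z' (ys j)).mp h).symm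
  have hnm : n = m := by
    apply le_antisymm
    · by_contra h
      push_neg at h
      set k : Fin n := ⟨m, h⟩ with hk
      obtain ⟨M, hM, hq⟩ := exists_maximal_not_mem (hxne k)
      have h1 := (e_not_mem_iff_lt_card mS z xs hM hxbase k).mp hq
      have h2 := hcard M hM
      have h3 : Nat.card {j : Fin m // mS.d z' (ys j) ∉ M} ≤ m := by
        have hle := Nat.card_le_card_of_injective
          (fun t : {j : Fin m // mS.d z' (ys j) ∉ M} => t.1)
          (fun a b hab => Subtype.ext hab)
        have hfin : Nat.card (Fin m) = m :=
          Nat.card_eq_fintype_card.trans (Fintype.card_fin _)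
        omega
      simp only [hk, Fin.val_mk] at h1
      omega
    · by_contra h
      push_neg at h
      set k : Fin m := ⟨n, h⟩ with hk
      obtain ⟨M, hM, hq⟩ := exists_maximal_not_mem (hyne k)
      have h1 := (e_not_mem_iff_lt_card mS z' ys hM hybase k).mp hq
      have h2 := hcard M hM
      have h3 : Nat.card {i : Fin n // mS.d z (xs i) ∉ M} ≤ n := by
        have hle := Nat.card_le_card_of_injective
          (fun t : {i : Fin n // mS.d z (xs i) ∉ M} => t.1)
          (fun a b hab => Subtype.ext hab)
        have hfin : Nat.card (Fin n) = n :=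
          Nat.card_eq_fintype_card.trans (Fintype.card_fin _)
        omega
      simp only [hk, Fin.val_mk] at h1
      omega
  subst hnm
  have hef : ∀ i : Fin n, mS.d z (xs i) = mS.d z' (ys i) := by
    intro i
    apply eq_of_stalks
    intro M hM
    rw [← not_iff_not, e_not_mem_iff_lt_card mS z xs hM hxbase i,
      e_not_mem_iff_lt_card mS z' ys hM hybase i, hcard M hM]
  -- the forward map
  have hFex : ∀ u : X, ∃ v, ConvCombWithZero mS z' (coord mS z xs u) ys v :=
    fun u => exists_comb mS z' ys hconv _ (coord_pairwise mS z sm xs hsm hxref u)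
  set F : X → X := fun u => Classical.choose (hFex u) with hF
  have hFspec : ∀ u, ConvCombWithZero mS z' (coord mS z xs u) ys (F u) :=
    fun u => Classical.choose_spec (hFex u)
  -- the inverse map
  have hGex : ∀ u : X, ∃ v, ConvCombWithZero mS z (coord mS z' ys u) xs v :=
    fun u => exists_comb mS z xs hconv _ (coord_pairwise mS z' sm' ys hsm' hyref u)
  set G : X → X := fun u => Classical.choose (hGex u) with hG
  have hGspec : ∀ u, ConvCombWithZero mS z (coord mS z' ys u) xs (G u) :=
    fun u => Classical.choose_spec (hGex u)
  -- coordinate transfer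
  have hcoordF : ∀ u j, coord mS z' ys (F u) j = coord mS z xs u j := by
    intro u j
    rw [coord_spec mS z' sm' ys hsm' hyref (hFspec u) j, ← hef j, coord_mul_e]
  have hcoordG : ∀ u i, coord mS z xs (G u) i = coord mS z' ys u i := by
    intro u i
    rw [coord_spec mS z sm xs hsm hxref (hGspec u) i, hef i, coord_mul_e]
  -- points with equal coordinates are equal
  have hxeq : ∀ u v : X, (∀ i, coord mS z xs u i = coord mS z xs v i) → u = v := by
    intro u v h
    refine (mS.d_eq_zero u v).mp (eq_zero_of_stalks fun M hM => ?_)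
    exact (dist_mem_iff mS z sm xs hsm hxref hM u v).mpr fun i => by rw [h i]
  have hyeq : ∀ u v : X, (∀ j, coord mS z' ys u j = coord mS z' ys v j) → u = v := by
    intro u v h
    refine (mS.d_eq_zero u v).mp (eq_zero_of_stalks fun M hM => ?_)
    exact (dist_mem_iff mS z' sm' ys hsm' hyref hM u v).mpr fun j => by rw [h j]
  have hGF : ∀ u, G (F u) = u := fun u =>
    hxeq _ _ fun i => by rw [hcoordG, hcoordF]
  have hFG : ∀ u, F (G u) = u := fun u =>
    hyeq _ _ fun j => by rw [hcoordF, hcoordG]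
  -- F preserves distances
  have hiso : ∀ u v, mS.d (F u) (F v) = mS.d u v := by
    intro u v
    apply eq_of_stalks
    intro M hM
    rw [dist_mem_iff mS z' sm' ys hsm' hyref hM (F u) (F v),
      dist_mem_iff mS z sm xs hsm hxref hM u v]
    simp only [hcoordF]
  -- F z = z'
  have hcz : ∀ i, coord mS z xs z i = 0 := fun i => mul_one_add_self _
  have hFz : F z = z' := by
    obtain ⟨-, -, h3⟩ := hFspec z
    have hs : ∑ i, coord mS z xs z i = 0 := Finset.sum_eq_zero fun i _ => hcz i
    rw [hs, add_zero, one_mul] at h3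
    exact (mS.d_eq_zero _ _).mp h3
  -- F (xs k) = ys k
  have hcx : ∀ (k j : Fin n), coord mS z xs (xs k) j =
      if j = k then mS.d z (xs k) else 0 := by
    intro k j
    by_cases h : j = k
    · subst h
      rw [if_pos rfl]
      unfold coord
      rw [(mS.d_eq_zero (xs j) (xs j)).mpr rfl, add_zero, mul_one]
    · rw [if_neg h]
      unfold coord
      rw [mS.d_symm (xs k) (xs j)]
      linear_combination orth_e_mul mS z sm xs hsm hxref h + add_self (mS.d z (xs j))
  have hFx : ∀ k : Fin n, F (xs k) = ys k := by
    intro k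
    refine (mS.d_eq_zero _ _).mp (eq_zero_of_stalks fun M hM => ?_)
    obtain ⟨-, h2, h3⟩ := hFspec (xs k)
    have hsumx : ∑ j, coord mS z xs (xs k) j = mS.d z (xs k) := by
      rw [Finset.sum_eq_single k (fun b _ hb => by rw [hcx k b, if_neg hb])
        (fun hu => absurd (Finset.mem_univ k) hu)]
      rw [hcx k k, if_pos rfl]
    by_cases he : mS.d z (xs k) ∈ M
    · rw [hsumx] at h3
      have h1M : 1 + mS.d z (xs k) ∉ M := fun hh => one_not_mem hM (by
        have := M.add_mem hh he
        rwa [add_assoc, add_self, add_zero] at this)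
      have hdz' : mS.d (F (xs k)) z' ∈ M := mem_of_mul_eq_zero hM h3 h1M
      have hz'y : mS.d z' (ys k) ∈ M := by rw [← hef k]; exact he
      exact tri_mem mS hM hdz' hz'y
    · have hk2 := h2 k
      rw [hcx k k, if_pos rfl] at hk2
      exact mem_of_mul_eq_zero hM hk2 he
  refine ⟨rfl, fun i => by simpa using hef i, F,
    Function.bijective_iff_has_inverse.mpr ⟨G, hGF, hFG⟩, hiso, hFz, fun i => by
      simpa using hFx i⟩
end
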